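/- arXiv:1906.10537 — 3 statements merged into one kernel-verified Lean document; each statement's English description precedes it below -/
import Mathlib

section
/- For all positive real numbers a, b, every integer n ≥ 1, and every k with 1 ≤ k ≤ n+1, the determinant of the n×n matrix E_n^k(a,b), obtained by deleting the k-th row of the (n+1)×n matrix E_n(a,b), equals (-1)^{n-k+1}·( det D_{k-1}(a,b)·det D_{n-k+1}(a,b) − b²·det D_{k-2}(a,b)·det D_{n-k}(a,b) ). -/
/-- The `n × n` matrix `D_n(a,b)`. -/
def Dmat (n : ℕ) (a b : ℝ) : Matrix (Fin n) (Fin n) ℝ :=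
  Matrix.of fun i j =>
    if (i : ℕ) = (j : ℕ) then -a
    else if (i : ℕ) + 1 = (j : ℕ) then b
    else if (i : ℕ) = (j : ℕ) + 1 then a
    else if (i : ℕ) = (j : ℕ) + 2 then -b
    else 0

/-- `det D_m(a,b)` extended to integer indices with `det D_{-1}(a,b) = 0`
(and `det D_0(a,b) = 1`, the determinant of the empty matrix). -/
noncomputable def dZ (a b : ℝ) (m : ℤ) : ℝ :=
  if 0 ≤ m then (Dmat m.toNat a b).det else 0

/-- The `(n+1) × n` matrix `E_n(a,b)` (rows indexed by `Fin (n+1)`, columns by `Fin n`). -/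
def Emat (n : ℕ) (a b : ℝ) : Matrix (Fin (n + 1)) (Fin n) ℝ :=
  Matrix.of fun i j =>
    if (i : ℕ) = (j : ℕ) then -a
    else if (i : ℕ) + 1 = (j : ℕ) then b
    else if (i : ℕ) = (j : ℕ) + 1 then a
    else if (i : ℕ) = (j : ℕ) + 2 then -b
    else 0

/-- `E_n^k(a,b)`: the `n × n` matrix obtained from `E_n(a,b)` by deleting the
`k`-th row (rows of `E_n(a,b)` being counted `1,…,n+1`). -/
def Ek (n : ℕ) (a b : ℝ) (k : ℕ) : Matrix (Fin n) (Fin n) ℝ :=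
  Matrix.of fun i j =>
    Emat n a b (if (i : ℕ) + 1 < k then i.castSucc else i.succ) j

namespace Aux

/-- band symbol -/
noncomputable def fb (a b : ℝ) (d : ℤ) : ℝ :=
  if d = 0 then -a else if d = -1 then b else if d = 1 then a else if d = 2 then -b else 0

lemma fb_big (a b : ℝ) (d : ℤ) (h : 3 ≤ d) : fb a b d = 0 := by
  unfold fb; split_ifs <;> first | rfl | omega

lemma fb_small (a b : ℝ) (d : ℤ) (h : d ≤ -2) : fb a b d = 0 := by
  unfold fb; split_ifs <;> first | rfl | omega

lemma fb_congr (a b : ℝ) {d e : ℤ} (h : d = e) : fb a b d = fb a b e := by rw [h]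

lemma Dmat_apply (n : ℕ) (a b : ℝ) (i j : Fin n) :
    Dmat n a b i j = fb a b ((i : ℤ) - (j : ℤ)) := by
  unfold Dmat fb
  simp only [Matrix.of_apply]
  split_ifs <;> first | rfl | omega

lemma Ek_apply (n : ℕ) (a b : ℝ) (k : ℕ) (i j : Fin n) :
    Ek n a b k i j
      = fb a b ((if (i : ℕ) + 1 < k then (i : ℤ) else (i : ℤ) + 1) - (j : ℤ)) := by
  unfold Ek Emat fb
  simp only [Matrix.of_apply]
  by_cases h : (i : ℕ) + 1 < k
  · simp only [h, if_true, Fin.coe_castSucc]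
    split_ifs <;> first | rfl | omega
  · simp only [h, if_false, Fin.val_succ]
    split_ifs <;> first | rfl | omega

lemma val_succAbove {n : ℕ} (p : Fin (n + 1)) (i : Fin n) :
    ((p.succAbove i : Fin (n + 1)) : ℕ) = if (i : ℕ) < (p : ℕ) then (i : ℕ) else (i : ℕ) + 1 := by
  rw [Fin.succAbove]
  split_ifs with h h' h'
  · rfl
  · exact absurd (by simpa [Fin.lt_def] using h) h'
  · exact absurd (by simpa [Fin.lt_def] using h') h
  · rfl

lemma Ek_one (n : ℕ) (a b : ℝ) : Ek n a b 1 = -(Dmat n a b).transpose := by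
  ext i j
  rw [Matrix.neg_apply, Matrix.transpose_apply, Ek_apply, Dmat_apply]
  rw [if_neg (by omega : ¬ ((i : ℕ) + 1 < 1))]
  unfold fb
  split_ifs <;> first | omega | ring

lemma det_Ek_one (n : ℕ) (a b : ℝ) : (Ek n a b 1).det = (-1) ^ n * (Dmat n a b).det := by
  rw [Ek_one, Matrix.det_neg, Matrix.det_transpose]
  simp

lemma Ek_eq_Dmat (n : ℕ) (a b : ℝ) (k : ℕ) (h : n + 1 ≤ k) : Ek n a b k = Dmat n a b := by
  ext i j
  rw [Ek_apply, Dmat_apply]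
  rw [if_pos (by omega : (i : ℕ) + 1 < k)]

lemma dZ_natCast (a b : ℝ) (p : ℕ) : dZ a b p = (Dmat p a b).det := by
  unfold dZ
  rw [if_pos (by positivity), Int.toNat_natCast]

lemma dZ_neg (a b : ℝ) (m : ℤ) (h : m < 0) : dZ a b m = 0 := by
  unfold dZ
  rw [if_neg (by omega)]

lemma dZ_zero (a b : ℝ) : dZ a b 0 = 1 := by
  have := dZ_natCast a b 0
  simpa [Matrix.det_fin_zero] using this

lemma dZ_one (a b : ℝ) : dZ a b 1 = -a := by
  have := dZ_natCast a b 1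
  simp only [Nat.cast_one] at this
  rw [this, Matrix.det_fin_one]
  simp [Dmat]

lemma dZ_two (a b : ℝ) : dZ a b 2 = a ^ 2 - a * b := by
  have := dZ_natCast a b 2
  simp only [Nat.cast_ofNat] at this
  rw [this, Matrix.det_fin_two]
  simp only [Dmat, Matrix.of_apply]
  norm_num
  ring

end Aux

namespace Aux

lemma expandC (a b : ℝ) (m : ℕ) :
    (Ek (m+2) a b 2).det = -a * (Ek (m+1) a b 1).det + b^2 * (Ek m a b 1).det := by
  rw [Matrix.det_succ_column_zero, Fin.sum_univ_succ, Fin.sum_univ_succ]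
  have e0 : Ek (m+2) a b 2 0 0 = -a := by
    rw [Ek_apply]; norm_num [fb]
  have e1 : Ek (m+2) a b 2 ((0 : Fin (m+1)).succ) 0 = -b := by
    rw [Ek_apply]; norm_num [fb]
  have erest : ∀ i : Fin m, Ek (m+2) a b 2 (i.succ.succ) 0 = 0 := by
    intro i
    rw [Ek_apply]
    apply fb_big
    simp only [Fin.val_succ, Fin.val_zero]
    split_ifs <;> push_cast <;> omega
  have hrest : ∑ i : Fin m,
      (-1 : ℝ) ^ ((i.succ.succ : Fin (m+2)) : ℕ) * Ek (m+2) a b 2 i.succ.succ 0 *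
        ((Ek (m+2) a b 2).submatrix (Fin.succAbove i.succ.succ) Fin.succ).det = 0 := by
    apply Finset.sum_eq_zero
    intro i _
    rw [erest i, mul_zero, zero_mul]
  rw [hrest]
  have h0 : (Ek (m+2) a b 2).submatrix (Fin.succAbove 0) Fin.succ = Ek (m+1) a b 1 := by
    ext i j
    simp only [Matrix.submatrix_apply, Fin.succAbove_zero, Ek_apply, Fin.val_succ, Fin.val_zero]
    apply fb_congr
    split_ifs <;> push_cast <;> omega
  have h1 : ((Ek (m+2) a b 2).submatrix (Fin.succAbove ((0:Fin (m+1)).succ)) Fin.succ).det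
      = b * (Ek m a b 1).det := by
    rw [Matrix.det_succ_row_zero, Fin.sum_univ_succ]
    have f0 : ((Ek (m+2) a b 2).submatrix (Fin.succAbove ((0:Fin (m+1)).succ)) Fin.succ) 0 0
        = b := by
      simp only [Matrix.submatrix_apply, Ek_apply]
      rw [val_succAbove]
      norm_num [fb]
    have frest : ∀ j : Fin m,
        ((Ek (m+2) a b 2).submatrix (Fin.succAbove ((0:Fin (m+1)).succ)) Fin.succ) 0 j.succ
        = 0 := by
      intro j
      simp only [Matrix.submatrix_apply, Ek_apply]
      rw [val_succAbove]
      apply fb_small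
      simp only [Fin.val_succ, Fin.val_zero]
      split_ifs <;> push_cast <;> omega
    have hr : ∑ j : Fin m, (-1 : ℝ) ^ ((j.succ : Fin (m+1)) : ℕ) *
        ((Ek (m+2) a b 2).submatrix (Fin.succAbove ((0:Fin (m+1)).succ)) Fin.succ) 0 j.succ *
        ((((Ek (m+2) a b 2).submatrix (Fin.succAbove ((0:Fin (m+1)).succ)) Fin.succ)).submatrix
          Fin.succ (Fin.succAbove j.succ)).det = 0 := by
      apply Finset.sum_eq_zero
      intro j _
      rw [frest j, mul_zero, zero_mul]
    rw [hr, f0]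
    have hsub : (((Ek (m+2) a b 2).submatrix (Fin.succAbove ((0:Fin (m+1)).succ)) Fin.succ)).submatrix
          Fin.succ (Fin.succAbove (0 : Fin (m+1))) = Ek m a b 1 := by
      ext i j
      simp only [Matrix.submatrix_apply, Fin.succAbove_zero, Ek_apply, Fin.val_succ, Fin.val_zero]
      rw [val_succAbove]
      apply fb_congr
      simp only [Fin.val_succ, Fin.val_zero]
      split_ifs <;> (try simp only [zero_add, Nat.cast_ite, Nat.cast_add, Nat.cast_one] at *) <;> (try split_ifs) <;> push_cast <;> omega
    rw [hsub]
    simp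
  rw [e0, e1, h0, h1]
  simp only [Fin.val_zero, Fin.val_succ, pow_zero, pow_succ, pow_one]
  ring

end Aux

namespace Aux

/-- If row 0 of `X` has its only nonzero entry `c` in column 0, then
`det X = c * det (X.submatrix succ succ)`. -/
lemma det_row0 {N : ℕ} (X : Matrix (Fin (N+1)) (Fin (N+1)) ℝ) (c : ℝ)
    (h0 : X 0 0 = c) (hz : ∀ j : Fin N, X 0 j.succ = 0) :
    X.det = c * (X.submatrix Fin.succ Fin.succ).det := by
  rw [Matrix.det_succ_row_zero, Fin.sum_univ_succ]
  have hr : ∑ j : Fin N, (-1 : ℝ) ^ ((j.succ : Fin (N+1)) : ℕ) * X 0 j.succ *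
      (X.submatrix Fin.succ (Fin.succAbove j.succ)).det = 0 := by
    apply Finset.sum_eq_zero
    intro j _
    rw [hz j, mul_zero, zero_mul]
  rw [hr, h0]
  simp

lemma expandD (a b : ℝ) (m : ℕ) :
    (Ek (m+3) a b 3).det
      = -a * (Ek (m+2) a b 2).det - a * b * (Ek (m+1) a b 1).det := by
  rw [Matrix.det_succ_column_zero, Fin.sum_univ_succ, Fin.sum_univ_succ]
  have e0 : Ek (m+3) a b 3 0 0 = -a := by
    rw [Ek_apply]; norm_num [fb]
  have e1 : Ek (m+3) a b 3 ((0 : Fin (m+2)).succ) 0 = a := by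
    rw [Ek_apply]; norm_num [fb]
  have hrest : ∑ i : Fin (m+1),
      (-1 : ℝ) ^ ((i.succ.succ : Fin (m+3)) : ℕ) * Ek (m+3) a b 3 i.succ.succ 0 *
        ((Ek (m+3) a b 3).submatrix (Fin.succAbove i.succ.succ) Fin.succ).det = 0 := by
    apply Finset.sum_eq_zero
    intro i _
    have : Ek (m+3) a b 3 (i.succ.succ) 0 = 0 := by
      rw [Ek_apply]
      apply fb_big
      simp only [Fin.val_succ, Fin.val_zero]
      split_ifs <;> push_cast <;> omega
    rw [this, mul_zero, zero_mul]
  rw [hrest]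
  have h0 : (Ek (m+3) a b 3).submatrix (Fin.succAbove 0) Fin.succ = Ek (m+2) a b 2 := by
    ext i j
    simp only [Matrix.submatrix_apply, Fin.succAbove_zero, Ek_apply, Fin.val_succ, Fin.val_zero]
    apply fb_congr
    split_ifs <;> push_cast <;> omega
  have h1 : ((Ek (m+3) a b 3).submatrix (Fin.succAbove ((0:Fin (m+2)).succ)) Fin.succ).det
      = b * (Ek (m+1) a b 1).det := by
    have hb : ((Ek (m+3) a b 3).submatrix (Fin.succAbove ((0:Fin (m+2)).succ)) Fin.succ) 0 0
        = b := by
      simp only [Matrix.submatrix_apply, Ek_apply]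
      rw [val_succAbove]
      norm_num [fb]
    have hz : ∀ j : Fin (m+1),
        ((Ek (m+3) a b 3).submatrix (Fin.succAbove ((0:Fin (m+2)).succ)) Fin.succ) 0 j.succ
        = 0 := by
      intro j
      simp only [Matrix.submatrix_apply, Ek_apply]
      rw [val_succAbove]
      apply fb_small
      simp only [Fin.val_succ, Fin.val_zero]
      split_ifs <;> push_cast <;> omega
    have hsub : (((Ek (m+3) a b 3).submatrix (Fin.succAbove ((0:Fin (m+2)).succ))
          Fin.succ).submatrix Fin.succ Fin.succ) = Ek (m+1) a b 1 := by
      ext i j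
      simp only [Matrix.submatrix_apply, Ek_apply, Fin.val_succ, Fin.val_zero]
      rw [val_succAbove]
      apply fb_congr
      simp only [Fin.val_succ, Fin.val_zero]
      split_ifs <;> (try simp only [zero_add, Nat.cast_ite, Nat.cast_add, Nat.cast_one] at *) <;> (try split_ifs) <;> push_cast <;> omega
    rw [det_row0 _ b hb hz, hsub]
  rw [e0, e1, h0, h1]
  simp only [Fin.val_zero, Fin.val_succ, pow_zero, pow_succ, pow_one]
  ring

end Aux

namespace Aux

lemma expandE (a b : ℝ) (m q : ℕ) :
    (Ek (m+3) a b (q+4)).det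
      = -a * (Ek (m+2) a b (q+3)).det - a * b * (Ek (m+1) a b (q+2)).det
        - b^3 * (Ek m a b (q+1)).det := by
  rw [Matrix.det_succ_column_zero, Fin.sum_univ_succ, Fin.sum_univ_succ, Fin.sum_univ_succ]
  have e0 : Ek (m+3) a b (q+4) 0 0 = -a := by
    rw [Ek_apply]
    rw [if_pos (by simp)]
    norm_num [fb]
  have e1 : Ek (m+3) a b (q+4) ((0 : Fin (m+2)).succ) 0 = a := by
    rw [Ek_apply]
    rw [if_pos (by simp only [Fin.val_succ, Fin.val_zero]; omega)]
    norm_num [fb]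
  have e2 : Ek (m+3) a b (q+4) (((0 : Fin (m+1)).succ).succ) 0 = -b := by
    rw [Ek_apply]
    rw [if_pos (by simp only [Fin.val_succ, Fin.val_zero]; omega)]
    simp only [Fin.val_succ, Fin.val_zero]
    norm_num [fb]
  have hrest : ∑ i : Fin m,
      (-1 : ℝ) ^ ((i.succ.succ.succ : Fin (m+3)) : ℕ) * Ek (m+3) a b (q+4) i.succ.succ.succ 0 *
        ((Ek (m+3) a b (q+4)).submatrix (Fin.succAbove i.succ.succ.succ) Fin.succ).det = 0 := by
    apply Finset.sum_eq_zero
    intro i _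
    have : Ek (m+3) a b (q+4) (i.succ.succ.succ) 0 = 0 := by
      rw [Ek_apply]
      apply fb_big
      simp only [Fin.val_succ, Fin.val_zero]
      split_ifs <;> push_cast <;> omega
    rw [this, mul_zero, zero_mul]
  rw [hrest]
  -- first minor
  have h0 : (Ek (m+3) a b (q+4)).submatrix (Fin.succAbove 0) Fin.succ = Ek (m+2) a b (q+3) := by
    ext i j
    simp only [Matrix.submatrix_apply, Fin.succAbove_zero, Ek_apply, Fin.val_succ, Fin.val_zero]
    apply fb_congr
    split_ifs <;> push_cast <;> omega
  -- second minor
  have h1 : ((Ek (m+3) a b (q+4)).submatrix (Fin.succAbove ((0:Fin (m+2)).succ)) Fin.succ).det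
      = b * (Ek (m+1) a b (q+2)).det := by
    have hb : ((Ek (m+3) a b (q+4)).submatrix (Fin.succAbove ((0:Fin (m+2)).succ)) Fin.succ) 0 0
        = b := by
      simp only [Matrix.submatrix_apply, Ek_apply]
      rw [val_succAbove]
      norm_num [fb]
    have hz : ∀ j : Fin (m+1),
        ((Ek (m+3) a b (q+4)).submatrix (Fin.succAbove ((0:Fin (m+2)).succ)) Fin.succ) 0 j.succ
        = 0 := by
      intro j
      simp only [Matrix.submatrix_apply, Ek_apply]
      rw [val_succAbove]
      apply fb_small
      simp only [Fin.val_succ, Fin.val_zero]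
      split_ifs <;> push_cast <;> omega
    have hsub : (((Ek (m+3) a b (q+4)).submatrix (Fin.succAbove ((0:Fin (m+2)).succ))
          Fin.succ).submatrix Fin.succ Fin.succ) = Ek (m+1) a b (q+2) := by
      ext i j
      simp only [Matrix.submatrix_apply, Ek_apply, Fin.val_succ, Fin.val_zero]
      rw [val_succAbove]
      apply fb_congr
      simp only [Fin.val_succ, Fin.val_zero]
      split_ifs <;> (try simp only [zero_add, Nat.cast_ite, Nat.cast_add, Nat.cast_one] at *) <;> (try split_ifs) <;> push_cast <;> omega
    rw [det_row0 _ b hb hz, hsub]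
  -- third minor
  have h2 : ((Ek (m+3) a b (q+4)).submatrix
        (Fin.succAbove (((0:Fin (m+1)).succ).succ)) Fin.succ).det
      = b * (b * (Ek m a b (q+1)).det) := by
    set X := (Ek (m+3) a b (q+4)).submatrix
        (Fin.succAbove (((0:Fin (m+1)).succ).succ)) Fin.succ with hX
    have hb : X 0 0 = b := by
      rw [hX]
      simp only [Matrix.submatrix_apply, Ek_apply]
      rw [val_succAbove]
      norm_num [fb, Nat.mod_eq_of_lt (show 2 < m + 2 + 1 by omega)]
    have hz : ∀ j : Fin (m+1), X 0 j.succ = 0 := by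
      intro j
      rw [hX]
      simp only [Matrix.submatrix_apply, Ek_apply]
      rw [val_succAbove]
      apply fb_small
      simp only [Fin.val_succ, Fin.val_zero]
      split_ifs <;> push_cast <;> omega
    rw [det_row0 _ b hb hz]
    congr 1
    set Y := X.submatrix Fin.succ Fin.succ with hY
    have hb2 : Y 0 0 = b := by
      rw [hY, hX]
      simp only [Matrix.submatrix_apply, Ek_apply]
      rw [val_succAbove]
      norm_num [fb, Nat.mod_eq_of_lt (show 2 < m + 2 + 1 by omega)]
    have hz2 : ∀ j : Fin m, Y 0 j.succ = 0 := by
      intro j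
      rw [hY, hX]
      simp only [Matrix.submatrix_apply, Ek_apply]
      rw [val_succAbove]
      apply fb_small
      simp only [Fin.val_succ, Fin.val_zero]
      split_ifs <;> push_cast <;> omega
    have hsub2 : Y.submatrix Fin.succ Fin.succ = Ek m a b (q+1) := by
      ext i j
      rw [hY, hX]
      simp only [Matrix.submatrix_apply, Ek_apply, Fin.val_succ, Fin.val_zero]
      rw [val_succAbove]
      apply fb_congr
      simp only [Fin.val_succ, Fin.val_zero]
      split_ifs <;> (try simp only [zero_add, Nat.cast_ite, Nat.cast_add, Nat.cast_one] at *) <;> (try split_ifs) <;> push_cast <;> omega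
    rw [det_row0 _ b hb2 hz2, hsub2]
  rw [e0, e1, e2, h0, h1, h2]
  simp only [Fin.val_zero, Fin.val_succ, pow_zero, pow_succ, pow_one]
  ring

end Aux

namespace Aux

lemma dZ_rec (a b : ℝ) (m : ℤ) (h : 1 ≤ m) :
    dZ a b m = -a * dZ a b (m-1) - a*b*dZ a b (m-2) - b^3*dZ a b (m-3) := by
  obtain ⟨p, hp⟩ : ∃ p : ℕ, m = (p:ℤ) + 1 := ⟨(m-1).toNat, by omega⟩
  subst hp
  match p with
  | 0 =>
    rw [show ((0:ℕ):ℤ) + 1 = 1 by norm_num, show (1:ℤ) - 1 = 0 by norm_num,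
      show (1:ℤ) - 2 = -1 by norm_num, show (1:ℤ) - 3 = -2 by norm_num,
      dZ_one, dZ_zero, dZ_neg a b (-1) (by norm_num), dZ_neg a b (-2) (by norm_num)]
    ring
  | 1 =>
    rw [show ((1:ℕ):ℤ) + 1 = 2 by norm_num, show (2:ℤ) - 1 = 1 by norm_num,
      show (2:ℤ) - 2 = 0 by norm_num, show (2:ℤ) - 3 = -1 by norm_num,
      dZ_two, dZ_one, dZ_zero, dZ_neg a b (-1) (by norm_num)]
    ring
  | Nat.succ (Nat.succ q) =>
    have h1 : ((q+2:ℕ):ℤ) + 1 = ((q+3:ℕ):ℤ) := by push_cast; ring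
    have h2 : ((q+3:ℕ):ℤ) - 1 = ((q+2:ℕ):ℤ) := by push_cast; ring
    have h3 : ((q+3:ℕ):ℤ) - 2 = ((q+1:ℕ):ℤ) := by push_cast; ring
    have h4 : ((q+3:ℕ):ℤ) - 3 = ((q:ℕ):ℤ) := by push_cast; ring
    rw [h1, h2, h3, h4, dZ_natCast, dZ_natCast, dZ_natCast, dZ_natCast]
    have hE := expandE a b q (q+1)
    rw [Ek_eq_Dmat q a b (q+1+1) (by omega), Ek_eq_Dmat (q+1) a b (q+1+2) (by omega),
      Ek_eq_Dmat (q+2) a b (q+1+3) (by omega), Ek_eq_Dmat (q+3) a b (q+1+4) (by omega)] at hE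
    exact hE

lemma main (a b : ℝ) : ∀ k : ℕ, 1 ≤ k → ∀ m : ℕ,
    (Ek (k - 1 + m) a b k).det
      = (-1:ℝ)^m * (dZ a b ((k:ℤ)-1) * dZ a b (m:ℤ)
          - b^2 * dZ a b ((k:ℤ)-2) * dZ a b ((m:ℤ)-1)) := by
  intro k
  induction k using Nat.strong_induction_on with
  | _ k IH =>
  intro hk m
  match k with
  | 1 =>
    rw [show (1:ℕ) - 1 + m = m by omega, det_Ek_one,
      show ((1:ℕ):ℤ) - 1 = 0 by norm_num, show ((1:ℕ):ℤ) - 2 = -1 by norm_num,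
      dZ_zero, dZ_neg a b (-1) (by norm_num), dZ_natCast]
    ring
  | 2 =>
    rw [show ((2:ℕ):ℤ) - 1 = 1 by norm_num, show ((2:ℕ):ℤ) - 2 = 0 by norm_num,
      dZ_one, dZ_zero]
    match m with
    | 0 =>
      rw [show (2:ℕ) - 1 + 0 = 1 by omega, Ek_eq_Dmat 1 a b 2 (by omega),
        Matrix.det_fin_one, show ((0:ℕ):ℤ) = 0 by norm_num,
        show (0:ℤ) - 1 = -1 by norm_num, dZ_zero, dZ_neg a b (-1) (by norm_num)]
      simp only [Dmat, Matrix.of_apply]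
      norm_num
    | Nat.succ p =>
      rw [show (2:ℕ) - 1 + (p+1) = p + 2 by omega, expandC, det_Ek_one, det_Ek_one,
        show ((p+1:ℕ):ℤ) - 1 = ((p:ℕ):ℤ) by push_cast; ring,
        dZ_natCast, dZ_natCast]
      simp only [Nat.succ_eq_add_one, pow_succ]
      ring
  | 3 =>
    rw [show ((3:ℕ):ℤ) - 1 = 2 by norm_num, show ((3:ℕ):ℤ) - 2 = 1 by norm_num,
      dZ_two, dZ_one]
    match m with
    | 0 =>
      rw [show (3:ℕ) - 1 + 0 = 2 by omega, Ek_eq_Dmat 2 a b 3 (by omega),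
        Matrix.det_fin_two, show ((0:ℕ):ℤ) = 0 by norm_num,
        show (0:ℤ) - 1 = -1 by norm_num, dZ_zero, dZ_neg a b (-1) (by norm_num)]
      simp only [Dmat, Matrix.of_apply]
      norm_num
      ring
    | Nat.succ p =>
      have I2 := IH 2 (by omega) (by omega) (p+1)
      rw [show (2:ℕ) - 1 + (p+1) = p + 2 by omega,
        show ((2:ℕ):ℤ) - 1 = 1 by norm_num, show ((2:ℕ):ℤ) - 2 = 0 by norm_num,
        dZ_one, dZ_zero] at I2
      rw [show (3:ℕ) - 1 + (p+1) = p + 3 by omega, expandD, I2, det_Ek_one,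
        show ((p+1:ℕ):ℤ) - 1 = ((p:ℕ):ℤ) by push_cast; ring,
        dZ_natCast, dZ_natCast]
      simp only [Nat.succ_eq_add_one, pow_succ]
      ring
  | Nat.succ (Nat.succ (Nat.succ (Nat.succ q))) =>
    -- k = q + 4
    have hsz : (q+4:ℕ) - 1 + m = (q + m) + 3 := by omega
    rw [hsz, expandE]
    have I3 := IH (q+3) (by omega) (by omega) m
    have I2 := IH (q+2) (by omega) (by omega) m
    have I1 := IH (q+1) (by omega) (by omega) m
    rw [show (q+3:ℕ) - 1 + m = q + m + 2 by omega,
      show ((q+3:ℕ):ℤ) - 1 = (q:ℤ) + 2 by push_cast; ring,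
      show ((q+3:ℕ):ℤ) - 2 = (q:ℤ) + 1 by push_cast; ring] at I3
    rw [show (q+2:ℕ) - 1 + m = q + m + 1 by omega,
      show ((q+2:ℕ):ℤ) - 1 = (q:ℤ) + 1 by push_cast; ring,
      show ((q+2:ℕ):ℤ) - 2 = (q:ℤ) by push_cast; ring] at I2
    rw [show (q+1:ℕ) - 1 + m = q + m by omega,
      show ((q+1:ℕ):ℤ) - 1 = (q:ℤ) by push_cast; ring,
      show ((q+1:ℕ):ℤ) - 2 = (q:ℤ) - 1 by push_cast; ring] at I1
    rw [I3, I2, I1]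
    have hrec1 : dZ a b ((q:ℤ)+3) = -a * dZ a b ((q:ℤ)+2) - a*b*dZ a b ((q:ℤ)+1)
        - b^3 * dZ a b (q:ℤ) := by
      have h := dZ_rec a b ((q:ℤ)+3) (by omega)
      rw [show (q:ℤ)+3-1 = (q:ℤ)+2 by ring, show (q:ℤ)+3-2 = (q:ℤ)+1 by ring,
        show (q:ℤ)+3-3 = (q:ℤ) by ring] at h
      exact h
    have hrec2 : dZ a b ((q:ℤ)+2) = -a * dZ a b ((q:ℤ)+1) - a*b*dZ a b (q:ℤ)
        - b^3 * dZ a b ((q:ℤ)-1) := by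
      have h := dZ_rec a b ((q:ℤ)+2) (by omega)
      rw [show (q:ℤ)+2-1 = (q:ℤ)+1 by ring, show (q:ℤ)+2-2 = (q:ℤ) by ring,
        show (q:ℤ)+2-3 = (q:ℤ)-1 by ring] at h
      exact h
    rw [show ((q+4:ℕ):ℤ) - 1 = (q:ℤ) + 3 by push_cast; ring,
      show ((q+4:ℕ):ℤ) - 2 = (q:ℤ) + 2 by push_cast; ring,
      hrec1, hrec2]
    ring

end Aux

theorem stmt1 (a b : ℝ) (ha : 0 < a) (hb : 0 < b) (n : ℕ) (hn : 1 ≤ n)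
    (k : ℕ) (hk1 : 1 ≤ k) (hk2 : k ≤ n + 1) :
    (Ek n a b k).det =
      (-1 : ℝ) ^ ((n : ℤ) - (k : ℤ) + 1) *
        (dZ a b ((k : ℤ) - 1) * dZ a b ((n : ℤ) - (k : ℤ) + 1) -
          b ^ 2 * dZ a b ((k : ℤ) - 2) * dZ a b ((n : ℤ) - (k : ℤ))) := by
  have hmain := Aux.main a b k hk1 (n + 1 - k)
  rw [show k - 1 + (n + 1 - k) = n by omega] at hmain
  have he1 : (n:ℤ) - (k:ℤ) + 1 = ((n + 1 - k : ℕ) : ℤ) := by omega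
  have he2 : (n:ℤ) - (k:ℤ) = ((n + 1 - k : ℕ) : ℤ) - 1 := by omega
  rw [he1, he2, zpow_natCast]
  exact hmain
end

section
/- Let a be a positive real number and suppose α, β, γ are three pairwise distinct complex numbers such that x³ + a·x² + a·x + 1 = (x−α)(x−β)(x−γ) as polynomials. Then for every integer k ≥ 1, d_k = 1/(α^{k+1}(α−β)(γ−α)) + 1/(β^{k+1}(α−β)(β−γ)) + 1/(γ^{k+1}(γ−α)(β−γ)). -/
set_option maxHeartbeats 1000000

lemma succAbove_val {n : ℕ} (p : Fin (n+1)) (i : Fin n) :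
    ((p.succAbove i : Fin (n+1)) : ℕ) = if (i:ℕ) < (p:ℕ) then (i:ℕ) else (i:ℕ)+1 := by
  rw [Fin.succAbove]
  split_ifs with h1 h2 h2 <;> simp_all [Fin.lt_def]

lemma Dmat_shift {m M : ℕ} (a b : ℝ) (c : ℕ) (i j : Fin m) (I J : Fin M)
    (hI : (I:ℕ) = (i:ℕ) + c) (hJ : (J:ℕ) = (j:ℕ) + c) :
    Dmat M a b I J = Dmat m a b i j := by
  simp only [Dmat, Matrix.of_apply, hI, hJ]
  split_ifs <;> first | rfl | omega

lemma Dmat_apply_eq_zero {M : ℕ} (a b : ℝ) (I J : Fin M)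
    (h1 : (I:ℕ) ≠ (J:ℕ)) (h2 : (I:ℕ) + 1 ≠ (J:ℕ)) (h3 : (I:ℕ) ≠ (J:ℕ)+1) (h4 : (I:ℕ) ≠ (J:ℕ)+2) :
    Dmat M a b I J = 0 := by
  simp only [Dmat, Matrix.of_apply]
  split_ifs <;> first | rfl | omega

lemma hdP (a : ℝ) (n : ℕ) :
    ((Dmat (n+3) a 1).submatrix (Fin.succ ∘ Fin.succAbove 1) (Fin.succAbove 1 ∘ Fin.succ)).det
      = (Dmat n a 1).det := by
  rw [Matrix.det_succ_row_zero, Fin.sum_univ_succ]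
  have hz : ∀ x : Fin n, Dmat (n+3) a 1 1 x.succ.succ.succ = 0 := by
    intro x
    apply Dmat_apply_eq_zero <;> simp <;> omega
  have h00 : Dmat (n+3) a 1 1 2 = 1 := by
    simp [Dmat, Nat.mod_eq_of_lt (show 2 < n+3 by omega)]
  have e2 : (Dmat (n+3) a 1).submatrix ((Fin.succ ∘ Fin.succAbove 1) ∘ Fin.succ)
      ((Fin.succAbove 1 ∘ Fin.succ) ∘ Fin.succ) = Dmat n a 1 := by
    ext i j
    simp only [Matrix.submatrix_apply, Function.comp_apply]
    exact Dmat_shift a 1 3 i j _ _ (by simp [succAbove_val]) (by simp [succAbove_val])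
  simp [hz, h00, e2]

lemma hdN (a : ℝ) (n : ℕ) :
    ((Dmat (n+3) a 1).submatrix Fin.succ (Fin.succAbove 1)).det
      = a * (Dmat (n+1) a 1).det + (Dmat n a 1).det := by
  rw [Matrix.det_succ_column_zero, Fin.sum_univ_succ, Fin.sum_univ_succ]
  have hz : ∀ x : Fin n, Dmat (n+3) a 1 x.succ.succ.succ 0 = 0 := by
    intro x
    apply Dmat_apply_eq_zero <;> simp <;> omega
  have h00 : Dmat (n+3) a 1 1 0 = a := by
    simp [Dmat]
  have h10 : Dmat (n+3) a 1 2 0 = -1 := by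
    simp [Dmat, Nat.mod_eq_of_lt (show 2 < n+3 by omega)]
  have e1 : ((Dmat (n+3) a 1).submatrix Fin.succ (Fin.succAbove 1)).submatrix
      Fin.succ Fin.succ = Dmat (n+1) a 1 := by
    ext i j
    simp only [Matrix.submatrix_apply, Function.comp_apply]
    exact Dmat_shift a 1 2 i j _ _ (by simp [succAbove_val]) (by simp [succAbove_val])
  simp [hz, h00, h10, e1, hdP]

lemma det_rec (a : ℝ) (n : ℕ) :
    (Dmat (n+3) a 1).det =
      -a * (Dmat (n+2) a 1).det - a * (Dmat (n+1) a 1).det - (Dmat n a 1).det := by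
  rw [Matrix.det_succ_row_zero, Fin.sum_univ_succ, Fin.sum_univ_succ]
  have hz : ∀ j : Fin (n+1), Dmat (n+3) a 1 0 j.succ.succ = 0 := by
    intro j
    apply Dmat_apply_eq_zero <;> simp <;> omega
  have h00 : Dmat (n+3) a 1 0 0 = -a := by simp [Dmat]
  have h01 : Dmat (n+3) a 1 0 1 = 1 := by simp [Dmat]
  have e0 : (Dmat (n+3) a 1).submatrix Fin.succ Fin.succ = Dmat (n+2) a 1 := by
    ext i j
    simp only [Matrix.submatrix_apply]
    exact Dmat_shift a 1 1 i j _ _ (by simp) (by simp)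
  simp [hz, h00, h01, e0, hdN]
  ring

theorem stmt4 (a : ℝ) (ha : 0 < a) (α β γ : ℂ)
    (hαβ : α ≠ β) (hβγ : β ≠ γ) (hγα : γ ≠ α)
    (hfact : (Polynomial.X ^ 3 + Polynomial.C (a : ℂ) * Polynomial.X ^ 2 +
        Polynomial.C (a : ℂ) * Polynomial.X + 1 : Polynomial ℂ) =
      (Polynomial.X - Polynomial.C α) * (Polynomial.X - Polynomial.C β) *
        (Polynomial.X - Polynomial.C γ))
    (k : ℕ) (hk : 1 ≤ k) :
    ((Dmat k a 1).det : ℂ) =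
      1 / (α ^ (k + 1) * (α - β) * (γ - α)) +
      1 / (β ^ (k + 1) * (α - β) * (β - γ)) +
      1 / (γ ^ (k + 1) * (γ - α) * (β - γ)) := by
  have hev : ∀ x : ℂ, x^3 + a*x^2 + a*x + 1 = (x - α)*(x - β)*(x - γ) := by
    intro x
    have := congrArg (Polynomial.eval x) hfact
    simpa using this
  have hαr : α^3 + a*α^2 + a*α + 1 = 0 := by rw [hev α]; ring
  have hβr : β^3 + a*β^2 + a*β + 1 = 0 := by rw [hev β]; ring
  have hγr : γ^3 + a*γ^2 + a*γ + 1 = 0 := by rw [hev γ]; ring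
  have h0 := hev 0
  have h1 := hev 1
  have hm1 := hev (-1)
  have habc : α*β*γ = -1 := by linear_combination h0
  have he1 : α + β + γ = -(a:ℂ) := by linear_combination (1/2)*h1 + (1/2)*hm1 - h0
  have he2 : α*β + β*γ + γ*α = (a:ℂ) := by linear_combination hm1 - h0 - he1
  have hα0 : α ≠ 0 := by intro h; rw [h] at hαr; norm_num at hαr
  have hβ0 : β ≠ 0 := by intro h; rw [h] at hβr; norm_num at hβr
  have hγ0 : γ ≠ 0 := by intro h; rw [h] at hγr; norm_num at hγr
  have hab : α - β ≠ 0 := sub_ne_zero.mpr hαβ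
  have hbc : β - γ ≠ 0 := sub_ne_zero.mpr hβγ
  have hca : γ - α ≠ 0 := sub_ne_zero.mpr hγα
  -- the three-term sum lemma
  have key : ∀ u v w : ℂ, u ≠ 0 → v ≠ 0 → w ≠ 0 →
      1/u + 1/v + 1/w = (v*w + u*w + u*v)/(u*v*w) := by
    intro u v w hu hv hw
    field_simp
  -- recurrence for one term
  have term : ∀ (x c d : ℂ), x ≠ 0 → c ≠ 0 → d ≠ 0 → x^3 + a*x^2 + a*x + 1 = 0 →
      ∀ n : ℕ, (1:ℂ)/(x^(n+4)*c*d) =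
        -(a:ℂ)*(1/(x^(n+3)*c*d)) - a*(1/(x^(n+2)*c*d)) - 1/(x^(n+1)*c*d) := by
    intro x c d hx hc hd hroot n
    have hX : x^(n+4)*c*d ≠ 0 := mul_ne_zero (mul_ne_zero (pow_ne_zero _ hx) hc) hd
    have e1 : (1:ℂ)/(x^(n+1)*c*d) = x^3/(x^(n+4)*c*d) := by
      rw [div_eq_div_iff (mul_ne_zero (mul_ne_zero (pow_ne_zero _ hx) hc) hd) hX]; ring
    have e2 : (1:ℂ)/(x^(n+2)*c*d) = x^2/(x^(n+4)*c*d) := by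
      rw [div_eq_div_iff (mul_ne_zero (mul_ne_zero (pow_ne_zero _ hx) hc) hd) hX]; ring
    have e3 : (1:ℂ)/(x^(n+3)*c*d) = x/(x^(n+4)*c*d) := by
      rw [div_eq_div_iff (mul_ne_zero (mul_ne_zero (pow_ne_zero _ hx) hc) hd) hX]; ring
    rw [e1, e2, e3]
    have hcomb : -(a:ℂ)*(x/(x^(n+4)*c*d)) - a*(x^2/(x^(n+4)*c*d)) - x^3/(x^(n+4)*c*d)
        = (-(a:ℂ)*x - a*x^2 - x^3)/(x^(n+4)*c*d) := by ring
    have hnum : -(a:ℂ)*x - a*x^2 - x^3 = 1 := by linear_combination -hroot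
    rw [hcomb, hnum]
  have main : ∀ m : ℕ, ((Dmat m a 1).det : ℂ) =
      1 / (α ^ (m + 1) * (α - β) * (γ - α)) +
      1 / (β ^ (m + 1) * (α - β) * (β - γ)) +
      1 / (γ ^ (m + 1) * (γ - α) * (β - γ)) := by
    intro m
    induction m using Nat.strong_induction_on with
    | _ m ih =>
      have hu : ∀ l : ℕ, α ^ (l+1) * (α - β) * (γ - α) ≠ 0 := fun l =>
        mul_ne_zero (mul_ne_zero (pow_ne_zero _ hα0) hab) hca
      have hv : ∀ l : ℕ, β ^ (l+1) * (α - β) * (β - γ) ≠ 0 := fun l =>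
        mul_ne_zero (mul_ne_zero (pow_ne_zero _ hβ0) hab) hbc
      have hw : ∀ l : ℕ, γ ^ (l+1) * (γ - α) * (β - γ) ≠ 0 := fun l =>
        mul_ne_zero (mul_ne_zero (pow_ne_zero _ hγ0) hca) hbc
      match m with
      | 0 =>
        rw [Matrix.det_fin_zero]
        rw [key _ _ _ (hu 0) (hv 0) (hw 0), eq_div_iff (mul_ne_zero (mul_ne_zero (hu 0) (hv 0)) (hw 0))]
        push_cast
        linear_combination ((α-β)*(β-γ)*(γ-α))^2 * habc
      | 1 =>
        rw [Matrix.det_fin_one]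
        have : Dmat 1 a 1 0 0 = -a := by simp [Dmat]
        rw [this]
        rw [key _ _ _ (hu 1) (hv 1) (hw 1), eq_div_iff (mul_ne_zero (mul_ne_zero (hu 1) (hv 1)) (hw 1))]
        push_cast
        linear_combination (-(a:ℂ)*((α-β)*(β-γ)*(γ-α))^2*(α*β*γ-1)) * habc
          + ((α-β)*(β-γ)*(γ-α))^2 * he2
      | 2 =>
        rw [Matrix.det_fin_two]
        have h11 : Dmat 2 a 1 0 0 = -a := by simp [Dmat]
        have h22 : Dmat 2 a 1 1 1 = -a := by simp [Dmat]
        have h12 : Dmat 2 a 1 0 1 = 1 := by simp [Dmat]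
        have h21 : Dmat 2 a 1 1 0 = a := by simp [Dmat]
        rw [h11, h22, h12, h21]
        rw [key _ _ _ (hu 2) (hv 2) (hw 2), eq_div_iff (mul_ne_zero (mul_ne_zero (hu 2) (hv 2)) (hw 2))]
        push_cast
        linear_combination
          (((α-β)*(β-γ)*(γ-α))^2 * (((a:ℂ)^2-a)*((α*β*γ)^2-(α*β*γ)+1) - (α+β+γ))) * habc
          + (((α-β)*(β-γ)*(γ-α))^2 * (α*β+β*γ+γ*α+(a:ℂ))) * he2
          + ((α-β)*(β-γ)*(γ-α))^2 * he1
      | (n+3) =>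
        rw [det_rec a n]
        push_cast
        rw [ih (n+2) (by omega), ih (n+1) (by omega), ih n (by omega)]
        have t1 := term α (α-β) (γ-α) hα0 hab hca hαr n
        have t2 := term β (α-β) (β-γ) hβ0 hab hbc hβr n
        have t3 := term γ (γ-α) (β-γ) hγ0 hca hbc hγr n
        linear_combination -(t1 + t2 + t3)
  exact main k
end

section
/- For every real number a with |a| ≥ 2, every integer n ≥ 1, and all indices 1 ≤ i < j ≤ n+2, the n×n matrix G_n(a,1)^{i,j}, obtained by deleting the i-th and j-th rows of G_n(a,1), is invertible; that is, all order-n minors of G_n(a,1) are nonzero. -/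
/-- The `(n+2) × n` matrix `G_n(a,1)`: column `j` (for `j = 1,…,n`, here 0-indexed)
has entries `1, a, 1` in rows `j, j+1, j+2` (1-indexed) and `0` elsewhere. -/
def Gmat (n : ℕ) (a : ℝ) : Matrix (Fin (n + 2)) (Fin n) ℝ :=
  Matrix.of fun i j =>
    if (i : ℕ) = (j : ℕ) then 1
    else if (i : ℕ) = (j : ℕ) + 1 then a
    else if (i : ℕ) = (j : ℕ) + 2 then 1
    else 0

/-- `G_n(a,1)^{i,j}`: the `n × n` matrix obtained from `G_n(a,1)` by deleting its
`i`-th and `j`-th rows (rows counted `1,…,n+2`, with `i < j`). -/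
def Gij (n : ℕ) (a : ℝ) (i j : ℕ) : Matrix (Fin n) (Fin n) ℝ :=
  Matrix.of fun r c =>
    Gmat n a
      (if (r : ℕ) + 1 < i then r.castSucc.castSucc
       else if (r : ℕ) + 2 < j then r.succ.castSucc
       else r.succ.succ) c

/-- Extension of a vector `v : Fin n → ℝ` to all of `ℤ` by zero. -/
def Xfun (n : ℕ) (v : Fin n → ℝ) : ℤ → ℝ := fun s =>
  if hs : 0 ≤ s ∧ s < (n : ℤ) then v ⟨s.toNat, by omega⟩ else 0

lemma Xfun_pos (n : ℕ) (v : Fin n → ℝ) (s : ℤ) (hs : 0 ≤ s ∧ s < (n : ℤ)) :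
    Xfun n v s = v ⟨s.toNat, by omega⟩ := dif_pos hs

lemma Xfun_neg (n : ℕ) (v : Fin n → ℝ) (s : ℤ) (hs : ¬ (0 ≤ s ∧ s < (n : ℤ))) :
    Xfun n v s = 0 := dif_neg hs

lemma Gij_apply (n : ℕ) (a : ℝ) (i j : ℕ) (r : Fin n) (c : Fin n) (t : ℕ)
    (h : (((if (r : ℕ) + 1 < i then (r.castSucc.castSucc : Fin (n+2))
        else if (r : ℕ) + 2 < j then r.succ.castSucc
        else r.succ.succ) : Fin (n+2)) : ℕ) = t) :
    Gij n a i j r c =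
      if t = (c : ℕ) then 1 else if t = (c : ℕ) + 1 then a
      else if t = (c : ℕ) + 2 then 1 else 0 := by
  subst h
  rfl

lemma exists_row (n : ℕ) (i j t : ℕ) (hi : 1 ≤ i) (hij : i < j) (hj : j ≤ n + 2)
    (hn : 1 ≤ n) (ht : t ≤ n + 1) (h1 : t + 1 ≠ i) (h2 : t + 1 ≠ j) :
    ∃ r : Fin n, (((if (r : ℕ) + 1 < i then (r.castSucc.castSucc : Fin (n+2))
        else if (r : ℕ) + 2 < j then r.succ.castSucc
        else r.succ.succ) : Fin (n+2)) : ℕ) = t := by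
  by_cases hA : t + 1 < i
  · refine ⟨⟨t, by omega⟩, ?_⟩
    have : ((⟨t, by omega⟩ : Fin n) : ℕ) + 1 < i := hA
    rw [if_pos this]
    simp
  · by_cases hB : t + 1 < j
    · refine ⟨⟨t - 1, by omega⟩, ?_⟩
      have hc : ((⟨t - 1, by omega⟩ : Fin n) : ℕ) = t - 1 := rfl
      rw [if_neg (by omega), if_pos (by omega)]
      simp only [Fin.coe_castSucc, Fin.val_succ, hc]
      omega
    · refine ⟨⟨t - 2, by omega⟩, ?_⟩
      have hc : ((⟨t - 2, by omega⟩ : Fin n) : ℕ) = t - 2 := rfl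
      rw [if_neg (by omega), if_neg (by omega)]
      simp only [Fin.val_succ, hc]
      omega

theorem stmt10 (a : ℝ) (ha : 2 ≤ |a|) (n : ℕ) (hn : 1 ≤ n)
    (i j : ℕ) (hi : 1 ≤ i) (hij : i < j) (hj : j ≤ n + 2) :
    IsUnit (Gij n a i j) ∧ (Gij n a i j).det ≠ 0 := by
  have hdet : (Gij n a i j).det ≠ 0 := by
    intro h0
    obtain ⟨v, hv, hmul⟩ := Matrix.exists_mulVec_eq_zero_iff.mpr h0
    set X : ℤ → ℝ := Xfun n v with hXdef
    -- single-indicator sums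
    have T : ∀ s : ℤ, (∑ c : Fin n, if ((c : ℕ) : ℤ) = s then v c else 0) = X s := by
      intro s
      by_cases hs : 0 ≤ s ∧ s < (n : ℤ)
      · rw [hXdef, Xfun_pos n v s hs]
        rw [Finset.sum_eq_single (⟨s.toNat, by omega⟩ : Fin n)]
        · rw [if_pos (by show ((s.toNat : ℕ) : ℤ) = s; omega)]
        · intro b _ hb
          rw [if_neg]
          intro hbs
          exact hb (Fin.ext (show (b : ℕ) = s.toNat by omega))
        · intro h; exact absurd (Finset.mem_univ _) h
      · rw [hXdef, Xfun_neg n v s hs]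
        apply Finset.sum_eq_zero
        intro c _
        rw [if_neg]
        intro hc
        have := c.isLt
        exact hs ⟨by omega, by omega⟩
    -- row sums
    have sumlem : ∀ t : ℕ,
        (∑ c : Fin n, (if t = (c : ℕ) then (1 : ℝ) else if t = (c : ℕ) + 1 then a
          else if t = (c : ℕ) + 2 then 1 else 0) * v c)
        = X t + a * X ((t : ℤ) - 1) + X ((t : ℤ) - 2) := by
      intro t
      have hsplit : ∀ c : Fin n,
          (if t = (c : ℕ) then (1 : ℝ) else if t = (c : ℕ) + 1 then a
            else if t = (c : ℕ) + 2 then 1 else 0) * v c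
          = (if ((c : ℕ) : ℤ) = (t : ℤ) then v c else 0)
            + a * (if ((c : ℕ) : ℤ) = (t : ℤ) - 1 then v c else 0)
            + (if ((c : ℕ) : ℤ) = (t : ℤ) - 2 then v c else 0) := by
        intro c
        split_ifs <;> first | (exfalso; omega) | ring
      rw [Finset.sum_congr rfl (fun c _ => hsplit c), Finset.sum_add_distrib,
        Finset.sum_add_distrib, ← Finset.mul_sum, T, T, T]
    -- the key equations
    have key : ∀ t : ℕ, t ≤ n + 1 → t + 1 ≠ i → t + 1 ≠ j →
        X t + a * X ((t : ℤ) - 1) + X ((t : ℤ) - 2) = 0 := by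
      intro t ht h1 h2
      obtain ⟨r, hmap⟩ := exists_row n i j t hi hij hj hn ht h1 h2
      have h0 := congrFun hmul r
      simp only [Matrix.mulVec, dotProduct, Pi.zero_apply] at h0
      have hsum : (∑ c : Fin n, Gij n a i j r c * v c)
          = ∑ c : Fin n, (if t = (c : ℕ) then (1 : ℝ) else if t = (c : ℕ) + 1 then a
            else if t = (c : ℕ) + 2 then 1 else 0) * v c :=
        Finset.sum_congr rfl fun c _ => by rw [Gij_apply n a i j r c t hmap]
      rw [hsum, sumlem t] at h0
      exact h0
    -- region before row i
    have hA : ∀ k : ℕ, (k : ℤ) ≤ (i : ℤ) - 2 → X k = 0 := by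
      intro k
      induction k using Nat.strong_induction_on with
      | _ k ih =>
        intro hk
        have hE := key k (by omega) (by omega) (by omega)
        have e1 : X ((k : ℤ) - 1) = 0 := by
          by_cases h : 1 ≤ k
          · rw [show (k : ℤ) - 1 = ((k - 1 : ℕ) : ℤ) by omega]
            exact ih (k - 1) (by omega) (by omega)
          · exact Xfun_neg n v _ (by omega)
        have e2 : X ((k : ℤ) - 2) = 0 := by
          by_cases h : 2 ≤ k
          · rw [show (k : ℤ) - 2 = ((k - 2 : ℕ) : ℤ) by omega]
            exact ih (k - 2) (by omega) (by omega)
          · exact Xfun_neg n v _ (by omega)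
        rw [e1, e2] at hE
        linarith
    have hAZ : ∀ s : ℤ, s ≤ (i : ℤ) - 2 → X s = 0 := by
      intro s hs
      by_cases h : 0 ≤ s
      · rw [show s = ((s.toNat : ℕ) : ℤ) by omega]
        exact hA s.toNat (by omega)
      · exact Xfun_neg n v _ (by omega)
    -- region after row j
    have hB : ∀ k : ℕ, ∀ t : ℤ, (j : ℤ) - 2 ≤ t → (n : ℤ) ≤ t + k → X t = 0 := by
      intro k
      induction k with
      | zero =>
        intro t h1 h2
        exact Xfun_neg n v _ (by omega)
      | succ k ih =>
        intro t h1 h2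
        by_cases hn' : (n : ℤ) ≤ t
        · exact Xfun_neg n v _ (by omega)
        · have hE := key (t.toNat + 2) (by omega) (by omega) (by omega)
          rw [show ((t.toNat + 2 : ℕ) : ℤ) = t + 2 by omega,
            show (t + 2) - 1 = t + 1 by ring, show (t + 2) - 2 = t by ring] at hE
          have e1 : X (t + 2) = 0 := ih (t + 2) (by omega) (by omega)
          have e2 : X (t + 1) = 0 := ih (t + 1) (by omega) (by omega)
          rw [e1, e2] at hE
          linarith
    -- growth estimate in the middle block
    have hC : (i : ℤ) + 2 ≤ (j : ℤ) → ∀ k : ℕ, ∀ t : ℤ, (i : ℤ) - 1 ≤ t →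
        t ≤ (j : ℤ) - 3 → t ≤ (i : ℤ) - 1 + k →
        |X (t - 1)| + |X ((i : ℤ) - 1)| ≤ |X t| := by
      intro hij2 k
      induction k with
      | zero =>
        intro t h1 h2 h3
        rw [show t = (i : ℤ) - 1 by omega]
        rw [show (i : ℤ) - 1 - 1 = (i : ℤ) - 2 by ring, hAZ _ (le_refl _), abs_zero]
        linarith
      | succ k ih =>
        intro t h1 h2 h3
        by_cases hk : t ≤ (i : ℤ) - 1 + k
        · exact ih t h1 h2 hk
        · have hti : (i : ℤ) ≤ t := by omega
          have hE := key t.toNat (by omega) (by omega) (by omega)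
          rw [show ((t.toNat : ℕ) : ℤ) = t by omega] at hE
          have hprev := ih (t - 1) (by omega) (by omega) (by omega)
          rw [show t - 1 - 1 = t - 2 by ring] at hprev
          have habs : |X t| = |a * X (t - 1) + X (t - 2)| := by
            rw [show X t = -(a * X (t - 1) + X (t - 2)) by linarith, abs_neg]
          have h4 := abs_sub_abs_le_abs_sub (a * X (t - 1)) (-(X (t - 2)))
          rw [sub_neg_eq_add, abs_neg, abs_mul] at h4
          nlinarith [abs_nonneg (X (t - 1))]
    -- the middle boundary value vanishes
    have hXi1 : X ((i : ℤ) - 1) = 0 := by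
      by_cases hj2 : (i : ℤ) + 2 ≤ (j : ℤ)
      · have hE := key (j - 2) (by omega) (by omega) (by omega)
        rw [show (((j - 2 : ℕ)) : ℤ) = (j : ℤ) - 2 by omega,
          show (j : ℤ) - 2 - 1 = (j : ℤ) - 3 by ring,
          show (j : ℤ) - 2 - 2 = (j : ℤ) - 4 by ring] at hE
        have hB2 : X ((j : ℤ) - 2) = 0 := hB n ((j : ℤ) - 2) (le_refl _) (by omega)
        have hC3 := hC hj2 n ((j : ℤ) - 3) (by omega) (le_refl _) (by omega)
        rw [show (j : ℤ) - 3 - 1 = (j : ℤ) - 4 by ring] at hC3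
        have h5 : |X ((j : ℤ) - 4)| = |a| * |X ((j : ℤ) - 3)| := by
          rw [show X ((j : ℤ) - 4) = -(a * X ((j : ℤ) - 3)) by linarith, abs_neg, abs_mul]
        have h6 := abs_nonneg (X ((i : ℤ) - 1))
        have h7 := abs_nonneg (X ((j : ℤ) - 3))
        have h8 : |X ((i : ℤ) - 1)| = 0 := le_antisymm (by nlinarith) h6
        exact abs_eq_zero.mp h8
      · exact hB n ((i : ℤ) - 1) (by omega) (by omega)
    -- everything up to row j vanishes
    have hD : ∀ k : ℕ, (k : ℤ) ≤ (j : ℤ) - 2 → X k = 0 := by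
      intro k
      induction k using Nat.strong_induction_on with
      | _ k ih =>
        intro hk
        rcases lt_trichotomy ((k : ℤ)) ((i : ℤ) - 1) with h | h | h
        · exact hAZ k (by omega)
        · rw [h]; exact hXi1
        · have hE := key k (by omega) (by omega) (by omega)
          have e1 : X ((k : ℤ) - 1) = 0 := by
            rw [show (k : ℤ) - 1 = ((k - 1 : ℕ) : ℤ) by omega]
            exact ih (k - 1) (by omega) (by omega)
          have e2 : X ((k : ℤ) - 2) = 0 := by
            by_cases h2 : 2 ≤ k
            · rw [show (k : ℤ) - 2 = ((k - 2 : ℕ) : ℤ) by omega]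
              exact ih (k - 2) (by omega) (by omega)
            · exact Xfun_neg n v _ (by omega)
          rw [e1, e2] at hE
          linarith
    -- conclude v = 0
    have hvz : v = 0 := by
      funext c
      have hc := c.isLt
      have hz : X ((c : ℕ) : ℤ) = 0 := by
        by_cases h : ((c : ℕ) : ℤ) ≤ (j : ℤ) - 2
        · exact hD c h
        · exact hB n _ (by omega) (by omega)
      rw [hXdef, Xfun_pos n v _ ⟨by omega, by omega⟩] at hz
      have : (⟨(((c : ℕ) : ℤ)).toNat, by omega⟩ : Fin n) = c := Fin.ext (show (((c : ℕ) : ℤ)).toNat = (c : ℕ) by omega)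
      rw [this] at hz
      simpa using hz
    exact hv hvz
  exact ⟨(Matrix.isUnit_iff_isUnit_det _).mpr (isUnit_iff_ne_zero.mpr hdet), hdet⟩
end
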